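/- Let m ≥ 2 be an integer, N = 2m+1, and let A be an honest matrix of order N satisfying the apex property [A^{⊗(2m+1)}]_{i,j} ≤ L for all i, j. Then [A^{⊗(2m+1)} ⊗ A^{⊗(2m+1)}]_{i,i} = 2·L for every index i. -/

import Mathlib

open Finset

/-- Max-plus matrix product over `ℝ_max = WithBot ℝ` (with `ε = ⊥`, `ε + x = ε`). -/
noncomputable def mpMul {N : ℕ} [NeZero N]
    (A B : Matrix (ZMod N) (ZMod N) (WithBot ℝ)) :
    Matrix (ZMod N) (ZMod N) (WithBot ℝ) :=
  fun i j => Finset.univ.sup fun k => A i k + B k j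

/-- Max-plus identity matrix. -/
noncomputable def mpId {N : ℕ} : Matrix (ZMod N) (ZMod N) (WithBot ℝ) :=
  fun i j => if i = j then (0 : WithBot ℝ) else ⊥

/-- Max-plus matrix power: `mpPow A k = A^{⊗k}` (with `A^{⊗0}` the max-plus identity). -/
noncomputable def mpPow {N : ℕ} [NeZero N]
    (A : Matrix (ZMod N) (ZMod N) (WithBot ℝ)) : ℕ → Matrix (ZMod N) (ZMod N) (WithBot ℝ)
  | 0 => mpId
  | k + 1 => mpMul (mpPow A k) A

/-- `A` is an honest matrix (with `r = 2`): `[A]_{i,j} ≠ ε` exactly when `i ≡ j+1` or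
`i ≡ j+2 (mod N)`; moreover `[A]_{j+1,j} > 0` and `[A]_{j+2,j} < 0` for all `j`. -/
def Honest {N : ℕ} (A : Matrix (ZMod N) (ZMod N) (WithBot ℝ)) : Prop :=
  (∀ i j : ZMod N, A i j ≠ ⊥ ↔ (i = j + 1 ∨ i = j + 2)) ∧
  (∀ j : ZMod N, 0 < A (j + 1) j) ∧
  (∀ j : ZMod N, A (j + 2) j < 0)

/-- If `A` satisfies the apex property `[A^{⊗(2m+1)}]_{i,j} ≤ L` for all `i, j`,
then `[A^{⊗(2m+1)} ⊗ A^{⊗(2m+1)}]_{i,i} = 2·L` for every index `i`. -/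

private lemma path_lb {N : ℕ} [NeZero N] (A : Matrix (ZMod N) (ZMod N) (WithBot ℝ)) :
    ∀ (n : ℕ) (j : ZMod N),
      (∑ t ∈ Finset.range n, A ((j + (t : ZMod N)) + 1) (j + (t : ZMod N)))
        ≤ mpPow A n (j + (n : ZMod N)) j := by
  intro n
  induction n with
  | zero =>
      intro j
      simp [mpPow, mpId]
  | succ n ih =>
      intro j
      rw [Finset.sum_range_succ']
      have hcong : ∀ t : ℕ, (j : ZMod N) + ((t + 1 : ℕ) : ZMod N) = (j + 1) + (t : ZMod N) := by
        intro t; push_cast; ring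
      have h1 : (∑ t ∈ Finset.range n, A ((j + ((t + 1 : ℕ) : ZMod N)) + 1) (j + ((t+1 : ℕ) : ZMod N)))
          = ∑ t ∈ Finset.range n, A (((j + 1) + (t : ZMod N)) + 1) ((j + 1) + (t : ZMod N)) := by
        refine Finset.sum_congr rfl fun t _ => ?_
        rw [hcong t]
      rw [h1]
      have h0 : (j : ZMod N) + ((0 : ℕ) : ZMod N) = j := by push_cast; ring
      rw [h0]
      have step : mpPow A n ((j + 1) + (n : ZMod N)) (j + 1) + A (j + 1) j
          ≤ mpPow A (n + 1) (j + ((n + 1 : ℕ) : ZMod N)) j := by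
        have hc : (j : ZMod N) + ((n + 1 : ℕ) : ZMod N) = (j + 1) + (n : ZMod N) := by
          push_cast; ring
        rw [hc]
        exact Finset.le_sup (f := fun k => mpPow A n ((j + 1) + (n : ZMod N)) k + A k j)
          (Finset.mem_univ (j + 1))
      exact le_trans (add_le_add (ih (j + 1)) le_rfl) step

private lemma sum_shift {N : ℕ} [NeZero N] (g : ZMod N → WithBot ℝ) (i : ZMod N) :
    ∑ t ∈ Finset.range N, g (i + (t : ZMod N)) = ∑ j : ZMod N, g j := by
  refine Finset.sum_nbij' (fun t => i + (t : ZMod N)) (fun z => (z - i).val)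
    (fun a _ => Finset.mem_univ _) (fun a _ => Finset.mem_range.2 (ZMod.val_lt _))
    (fun a ha => ?_) (fun a _ => ?_) (fun a _ => rfl)
  · show (i + (a : ZMod N) - i).val = a
    rw [add_sub_cancel_left, ZMod.val_cast_of_lt (Finset.mem_range.1 ha)]
  · show i + (((a - i).val : ℕ) : ZMod N) = a
    rw [ZMod.natCast_rightInverse (a - i), add_sub_cancel]

theorem stmt4 (m : ℕ) (hm : 2 ≤ m)
    (A : Matrix (ZMod (2 * m + 1)) (ZMod (2 * m + 1)) (WithBot ℝ)) (hA : Honest A)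
    (L : WithBot ℝ)
    (hL : L = A 1 ((2 * m + 1 : ℕ) : ZMod (2 * m + 1)) +
        ∑ p ∈ Finset.Icc 1 (2 * m), A ((p : ZMod (2 * m + 1)) + 1) (p : ZMod (2 * m + 1)))
    (hapex : ∀ i j : ZMod (2 * m + 1), mpPow A (2 * m + 1) i j ≤ L)
    (i : ZMod (2 * m + 1)) :
    mpMul (mpPow A (2 * m + 1)) (mpPow A (2 * m + 1)) i i = 2 • L := by
  have key : ∀ j : ZMod (2 * m + 1),
      L ≤ mpPow A (2 * m + 1) j j ∧ mpPow A (2 * m + 1) j j ≤ L := by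
    intro j
    refine ⟨?_, hapex j j⟩
    have hlb := path_lb A (2 * m + 1) j
    have hc : (j : ZMod (2 * m + 1)) + ((2 * m + 1 : ℕ) : ZMod (2 * m + 1)) = j := by
      rw [ZMod.natCast_self, add_zero]
    rw [hc] at hlb
    refine le_trans (le_of_eq ?_) hlb
    -- L = shifted sum
    have h1 : (∑ t ∈ Finset.range (2 * m + 1),
        A ((j + (t : ZMod (2 * m + 1))) + 1) (j + (t : ZMod (2 * m + 1))))
        = ∑ z : ZMod (2 * m + 1), A (z + 1) z :=
      sum_shift (fun z => A (z + 1) z) j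
    have h2 : (∑ t ∈ Finset.range (2 * m + 1),
        A (((t : ZMod (2 * m + 1))) + 1) ((t : ZMod (2 * m + 1))))
        = ∑ z : ZMod (2 * m + 1), A (z + 1) z := by
      have := sum_shift (fun z => A (z + 1) z) 0
      simpa using this
    have hrange : Finset.range (2 * m + 1) = insert 0 (Finset.Icc 1 (2 * m)) := by
      ext x; simp [Nat.lt_succ_iff]; omega
    rw [hL, h1, ← h2, hrange, Finset.sum_insert (by simp)]
    have : ((2 * m + 1 : ℕ) : ZMod (2 * m + 1)) = ((0 : ℕ) : ZMod (2 * m + 1)) := by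
      rw [ZMod.natCast_self, Nat.cast_zero]
    rw [this]
    push_cast
    rw [zero_add]
  have hdiag : mpPow A (2 * m + 1) i i = L := le_antisymm (key i).2 (key i).1
  refine le_antisymm ?_ ?_
  · refine Finset.sup_le fun k _ => ?_
    rw [two_nsmul]
    exact add_le_add (hapex i k) (hapex k i)
  · rw [two_nsmul]
    calc L + L = mpPow A (2 * m + 1) i i + mpPow A (2 * m + 1) i i := by rw [hdiag]
      _ ≤ mpMul (mpPow A (2 * m + 1)) (mpPow A (2 * m + 1)) i i :=
        Finset.le_sup (f := fun k => mpPow A (2 * m + 1) i k + mpPow A (2 * m + 1) k i)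
          (Finset.mem_univ i)
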